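/- For all real x > 0, sinh(x)/x < (2 + cosh(x))/3. -/

import Mathlib

lemma cusa_aux1 {x : ℝ} (hx : 0 < x) : Real.sinh x < x * Real.cosh x := by
  have key : StrictMonoOn (fun y : ℝ => y * Real.cosh y - Real.sinh y) (Set.Ici 0) := by
    apply strictMonoOn_of_deriv_pos (convex_Ici 0)
    · fun_prop
    · intro y hy
      rw [interior_Ici] at hy
      have h : HasDerivAt (fun y : ℝ => y * Real.cosh y - Real.sinh y)
          (y * Real.sinh y) y := by
        have := ((hasDerivAt_id y).mul (Real.hasDerivAt_cosh y)).sub (Real.hasDerivAt_sinh y)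
        exact this.congr_deriv (by simp only [id_eq]; ring)
      rw [h.deriv]
      exact mul_pos hy (Real.sinh_pos_iff.mpr hy)
  have := key Set.self_mem_Ici (Set.mem_Ici.mpr hx.le) hx
  simpa using this

lemma cusa_aux2 {x : ℝ} (hx : 0 < x) : 2 * Real.cosh x < 2 + x * Real.sinh x := by
  have key : StrictMonoOn (fun y : ℝ => y * Real.sinh y - 2 * Real.cosh y) (Set.Ici 0) := by
    apply strictMonoOn_of_deriv_pos (convex_Ici 0)
    · fun_prop
    · intro y hy
      rw [interior_Ici] at hy
      have h : HasDerivAt (fun y : ℝ => y * Real.sinh y - 2 * Real.cosh y)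
          (y * Real.cosh y - Real.sinh y) y := by
        have := ((hasDerivAt_id y).mul (Real.hasDerivAt_sinh y)).sub
          ((Real.hasDerivAt_cosh y).const_mul 2)
        exact this.congr_deriv (by simp only [id_eq]; ring)
      rw [h.deriv]
      linarith [cusa_aux1 hy]
  have := key Set.self_mem_Ici (Set.mem_Ici.mpr hx.le) hx
  simp only [zero_mul, Real.sinh_zero, Real.cosh_zero] at this
  linarith

lemma cusa_aux3 {x : ℝ} (hx : 0 < x) : 3 * Real.sinh x < x * (2 + Real.cosh x) := by
  have key : StrictMonoOn (fun y : ℝ => y * (2 + Real.cosh y) - 3 * Real.sinh y) (Set.Ici 0) := by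
    apply strictMonoOn_of_deriv_pos (convex_Ici 0)
    · fun_prop
    · intro y hy
      rw [interior_Ici] at hy
      have h : HasDerivAt (fun y : ℝ => y * (2 + Real.cosh y) - 3 * Real.sinh y)
          (2 + y * Real.sinh y - 2 * Real.cosh y) y := by
        have := ((hasDerivAt_id y).mul ((Real.hasDerivAt_cosh y).const_add 2)).sub
          ((Real.hasDerivAt_sinh y).const_mul 3)
        exact this.congr_deriv (by simp only [id_eq]; ring)
      rw [h.deriv]
      linarith [cusa_aux2 hy]
  have := key Set.self_mem_Ici (Set.mem_Ici.mpr hx.le) hx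
  simp only [zero_mul, Real.sinh_zero, Real.cosh_zero] at this
  linarith

theorem hyperbolic_cusa (x : ℝ) (hx : 0 < x) :
    Real.sinh x / x < (2 + Real.cosh x) / 3 := by
  rw [div_lt_div_iff₀ hx (by norm_num)]
  have := cusa_aux3 hx
  linarith
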